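/- arXiv:2405.13556 — 3 statements merged into one kernel-verified Lean document; each statement's English description precedes it below -/
import Mathlib

section
/- Let A be an invertible block matrix over a field, block upper triangular with square diagonal blocks A_{1,1}, …, A_{M,M}. Then B = A⁻¹ is block upper triangular with the same block structure, and for j ≤ k the block B_{j,k} equals the sum, over all integer tuples (i₁,…,i_ℓ) with j = i₁ < i₂ < ⋯ < i_ℓ = k, of (−1)^{ℓ−1} A_{i₁,i₁}⁻¹ A_{i₁,i₂} A_{i₂,i₂}⁻¹ ⋯ A_{i_{ℓ−1},i_ℓ} A_{i_ℓ,i_ℓ}⁻¹. -/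
open Matrix

variable {K : Type*} [Field K] {M : ℕ} {n : Fin M → ℕ}

/-- The `(j,k)` block of a matrix indexed by `Σ j, Fin (n j)`. -/
def getBlock (A : Matrix (Σ j : Fin M, Fin (n j)) (Σ j : Fin M, Fin (n j)) K)
    (j k : Fin M) : Matrix (Fin (n j)) (Fin (n k)) K :=
  fun a b => A ⟨j, a⟩ ⟨k, b⟩

/-- Embed a `(j,k)` block back into a full-size matrix (zero elsewhere). -/
def embedBlock (j k : Fin M) (X : Matrix (Fin (n j)) (Fin (n k)) K) :
    Matrix (Σ j : Fin M, Fin (n j)) (Σ j : Fin M, Fin (n j)) K :=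
  fun p q =>
    if hp : p.1 = j then
      if hq : q.1 = k then X (Fin.cast (congrArg n hp) p.2) (Fin.cast (congrArg n hq) q.2)
      else 0
    else 0

/-- The inverse of the `j`-th diagonal block, embedded as a full-size matrix. -/
noncomputable def diagInv (A : Matrix (Σ j : Fin M, Fin (n j)) (Σ j : Fin M, Fin (n j)) K)
    (j : Fin M) : Matrix (Σ j : Fin M, Fin (n j)) (Σ j : Fin M, Fin (n j)) K :=
  embedBlock j j (getBlock A j j)⁻¹

/-- The alternating product `A_{i₁,i₁}⁻¹ A_{i₁,i₂} A_{i₂,i₂}⁻¹ ⋯ A_{i_{ℓ-1},i_ℓ} A_{i_ℓ,i_ℓ}⁻¹`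
along a list of block indices, assembled from full-size embedded blocks. -/
noncomputable def chainProd (A : Matrix (Σ j : Fin M, Fin (n j)) (Σ j : Fin M, Fin (n j)) K) :
    List (Fin M) → Matrix (Σ j : Fin M, Fin (n j)) (Σ j : Fin M, Fin (n j)) K
  | [] => 1
  | [i] => diagInv A i
  | i :: j :: t => diagInv A i * embedBlock i j (getBlock A i j) * chainProd A (j :: t)

lemma getBlock_mul (X Y : Matrix (Σ j : Fin M, Fin (n j)) (Σ j : Fin M, Fin (n j)) K) (j k : Fin M) :
    getBlock (X * Y) j k = ∑ m : Fin M, getBlock X j m * getBlock Y m k := by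
  ext a b
  simp [getBlock, Matrix.mul_apply, Matrix.sum_apply, ← Finset.univ_sigma_univ, Finset.sum_sigma]

lemma getBlock_embedBlock (j k : Fin M) (X : Matrix (Fin (n j)) (Fin (n k)) K) :
    getBlock (embedBlock j k X) j k = X := by
  ext a b
  simp [getBlock, embedBlock]

lemma embedBlock_mul_getBlock (j m k : Fin M) (X : Matrix (Fin (n j)) (Fin (n m)) K)
    (Y : Matrix (Σ j : Fin M, Fin (n j)) (Σ j : Fin M, Fin (n j)) K) :
    getBlock (embedBlock j m X * Y) j k = X * getBlock Y m k := by
  ext a b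
  show (embedBlock j m X * Y) ⟨j,a⟩ ⟨k,b⟩ = _
  rw [Matrix.mul_apply, ← Finset.univ_sigma_univ, Finset.sum_sigma]
  rw [Finset.sum_eq_single m]
  · simp [embedBlock, getBlock, Matrix.mul_apply]
  · intro m' _ hm'
    apply Finset.sum_eq_zero
    intro c _
    simp [embedBlock, hm']
  · simp

lemma getBlock_sum {ι : Type*} (s : Finset ι)
    (F : ι → Matrix (Σ j : Fin M, Fin (n j)) (Σ j : Fin M, Fin (n j)) K) (j k : Fin M) :
    getBlock (∑ i ∈ s, F i) j k = ∑ i ∈ s, getBlock (F i) j k := by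
  ext a b; simp [getBlock, Matrix.sum_apply]

lemma getBlock_smul (c : K) (X : Matrix (Σ j : Fin M, Fin (n j)) (Σ j : Fin M, Fin (n j)) K)
    (j k : Fin M) : getBlock (c • X) j k = c • getBlock X j k := rfl

lemma getBlock_neg (X : Matrix (Σ j : Fin M, Fin (n j)) (Σ j : Fin M, Fin (n j)) K)
    (j k : Fin M) : getBlock (-X) j k = -getBlock X j k := rfl

lemma getBlock_one_diag (j : Fin M) :
    getBlock (1 : Matrix (Σ j : Fin M, Fin (n j)) (Σ j : Fin M, Fin (n j)) K) j j = 1 := by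
  ext a b
  simp [getBlock, Matrix.one_apply, Sigma.mk.inj_iff]

lemma getBlock_one_off {j k : Fin M} (h : j ≠ k) :
    getBlock (1 : Matrix (Σ j : Fin M, Fin (n j)) (Σ j : Fin M, Fin (n j)) K) j k = 0 := by
  ext a b
  simp [getBlock, Matrix.one_apply, Sigma.mk.inj_iff, h]

lemma chainProd_cons_sort (A : Matrix (Σ j : Fin M, Fin (n j)) (Σ j : Fin M, Fin (n j)) K)
    (j : Fin M) (t : Finset (Fin M)) (ht : t.Nonempty) :
    chainProd A (j :: t.sort (· ≤ ·)) =
      diagInv A j * embedBlock j (t.min' ht) (getBlock A j (t.min' ht)) *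
        chainProd A (t.sort (· ≤ ·)) := by
  have hl : t.sort (· ≤ ·) ≠ [] := by
    intro h
    have := Finset.length_sort (α := Fin M) (· ≤ ·) (s := t)
    rw [h] at this
    simp [Finset.card_eq_zero.mp this.symm] at ht
  have hhead : (t.sort (· ≤ ·)).head hl = t.min' ht := by
    rw [List.head_eq_getElem_zero, Finset.sorted_zero_eq_min']
  conv_lhs => rw [← List.cons_head_tail (l := t.sort (· ≤ ·)) hl]
  rw [show chainProd A (j :: (t.sort (· ≤ ·)).head hl :: (t.sort (· ≤ ·)).tail) =
      diagInv A j * embedBlock j ((t.sort (· ≤ ·)).head hl)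
        (getBlock A j ((t.sort (· ≤ ·)).head hl)) *
        chainProd A ((t.sort (· ≤ ·)).head hl :: (t.sort (· ≤ ·)).tail) from rfl]
  rw [List.cons_head_tail]
  congr 1 <;> rw [hhead]

noncomputable def Tsum (A : Matrix (Σ j : Fin M, Fin (n j)) (Σ j : Fin M, Fin (n j)) K)
    (j k : Fin M) : Matrix (Σ j : Fin M, Fin (n j)) (Σ j : Fin M, Fin (n j)) K :=
  ∑ s ∈ (Finset.Icc j k).powerset.filter (fun s => j ∈ s ∧ k ∈ s),
    ((-1 : K) ^ (s.card - 1)) • chainProd A (s.sort (· ≤ ·))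

lemma Tsum_diag (A : Matrix (Σ j : Fin M, Fin (n j)) (Σ j : Fin M, Fin (n j)) K) (j : Fin M) :
    Tsum A j j = diagInv A j := by
  have hset : (Finset.Icc j j).powerset.filter (fun s => j ∈ s ∧ j ∈ s)
      = {({j} : Finset (Fin M))} := by
    ext s
    simp only [Finset.Icc_self, Finset.mem_filter, Finset.mem_powerset,
      Finset.subset_singleton_iff, Finset.mem_singleton, and_self]
    constructor
    · rintro ⟨h1 | h1, h2⟩ <;> simp_all
    · rintro rfl; simp
  rw [Tsum, hset, Finset.sum_singleton]
  simp [Finset.sort_singleton, chainProd]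

lemma Tsum_rec (A : Matrix (Σ j : Fin M, Fin (n j)) (Σ j : Fin M, Fin (n j)) K)
    {j k : Fin M} (hjk : j < k) :
    Tsum A j k = ∑ m ∈ Finset.Ioc j k,
      -(diagInv A j * embedBlock j m (getBlock A j m) * Tsum A m k) := by
  have stepA : Tsum A j k = ∑ t ∈ (Finset.Ioc j k).powerset.filter (fun t => k ∈ t),
      ((-1 : K) ^ t.card) • chainProd A ((insert j t).sort (· ≤ ·)) := by
    rw [Tsum]
    refine Finset.sum_nbij' (fun s => s.erase j) (fun t => insert j t) ?_ ?_ ?_ ?_ ?_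
    · intro s hs
      simp only [Finset.mem_filter, Finset.mem_powerset] at hs ⊢
      obtain ⟨hsub, hj, hk⟩ := hs
      refine ⟨fun x hx => ?_, Finset.mem_erase.mpr ⟨hjk.ne', hk⟩⟩
      rcases Finset.mem_erase.mp hx with ⟨hxj, hxs⟩
      have := hsub hxs
      rw [Finset.mem_Icc] at this
      exact Finset.mem_Ioc.mpr ⟨lt_of_le_of_ne this.1 (Ne.symm hxj), this.2⟩
    · intro t ht
      simp only [Finset.mem_filter, Finset.mem_powerset] at ht ⊢
      obtain ⟨hsub, hk⟩ := ht
      refine ⟨Finset.insert_subset (Finset.mem_Icc.mpr ⟨le_refl j, hjk.le⟩) ?_,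
        Finset.mem_insert_self _ _, Finset.mem_insert_of_mem hk⟩
      exact fun x hx => Finset.mem_Icc.mpr ⟨(Finset.mem_Ioc.mp (hsub hx)).1.le,
        (Finset.mem_Ioc.mp (hsub hx)).2⟩
    · intro s hs
      simp only [Finset.mem_filter, Finset.mem_powerset] at hs
      exact Finset.insert_erase hs.2.1
    · intro t ht
      simp only [Finset.mem_filter, Finset.mem_powerset] at ht
      refine Finset.erase_insert fun hj => ?_
      exact absurd (Finset.mem_Ioc.mp (ht.1 hj)).1 (lt_irrefl j)
    · intro s hs
      simp only [Finset.mem_filter, Finset.mem_powerset] at hs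
      obtain ⟨hsub, hj, hk⟩ := hs
      rw [Finset.insert_erase hj]
      congr 2
      rw [Finset.card_erase_of_mem hj]
  rw [stepA]
  -- Step C: fiber by the minimum
  rw [← Finset.sum_fiberwise_of_maps_to (g := fun t : Finset (Fin M) => WithTop.untopD k t.min)
    (t := Finset.Ioc j k) ?mapsto]
  case mapsto =>
    intro t ht
    simp only [Finset.mem_filter, Finset.mem_powerset] at ht
    have hne : t.Nonempty := ⟨k, ht.2⟩
    have : WithTop.untopD k t.min = t.min' hne := by
      rw [← Finset.coe_min' hne]; rfl
    show WithTop.untopD k t.min ∈ Finset.Ioc j k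
    rw [this]
    exact ht.1 (Finset.min'_mem t hne)
  refine Finset.sum_congr rfl ?_
  intro m hm
  rw [Finset.mem_Ioc] at hm
  -- fiber identity
  have hfib : ((Finset.Ioc j k).powerset.filter (fun t => k ∈ t)).filter
      (fun t => WithTop.untopD k t.min = m)
      = (Finset.Icc m k).powerset.filter (fun t => m ∈ t ∧ k ∈ t) := by
    ext t
    simp only [Finset.mem_filter, Finset.mem_powerset]
    constructor
    · rintro ⟨⟨hsub, hk⟩, hmin⟩
      have hne : t.Nonempty := ⟨k, hk⟩
      have hmin' : t.min' hne = m := by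
        rw [← hmin, ← Finset.coe_min' hne]; rfl
      refine ⟨fun x hx => Finset.mem_Icc.mpr ⟨hmin' ▸ Finset.min'_le t x hx,
        (Finset.mem_Ioc.mp (hsub hx)).2⟩, hmin' ▸ Finset.min'_mem t hne, hk⟩
    · rintro ⟨hsub, hmt, hk⟩
      have hne : t.Nonempty := ⟨k, hk⟩
      have hmin' : t.min' hne = m := le_antisymm (Finset.min'_le t m hmt)
        ((Finset.mem_Icc.mp (hsub (Finset.min'_mem t hne))).1)
      refine ⟨⟨fun x hx => Finset.mem_Ioc.mpr
        ⟨lt_of_lt_of_le hm.1 (Finset.mem_Icc.mp (hsub hx)).1,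
          (Finset.mem_Icc.mp (hsub hx)).2⟩, hk⟩, ?_⟩
      rw [← Finset.coe_min' hne, hmin']; rfl
  rw [hfib]
  -- Step D
  have hrhs : -(diagInv A j * embedBlock j m (getBlock A j m) * Tsum A m k)
      = ∑ t ∈ (Finset.Icc m k).powerset.filter (fun t => m ∈ t ∧ k ∈ t),
          -(((-1:K) ^ (t.card - 1)) • (diagInv A j * embedBlock j m (getBlock A j m) *
            chainProd A (t.sort (· ≤ ·)))) := by
    rw [Tsum, Finset.mul_sum, ← Finset.sum_neg_distrib]
    exact Finset.sum_congr rfl fun t _ => by rw [Matrix.mul_smul]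
  rw [hrhs]
  refine Finset.sum_congr rfl fun t ht => ?_
  simp only [Finset.mem_filter, Finset.mem_powerset] at ht
  obtain ⟨hsub, hmt, hkt⟩ := ht
  have hne : t.Nonempty := ⟨m, hmt⟩
  have hjt : j ∉ t := fun h =>
    absurd (lt_of_lt_of_le hm.1 (Finset.mem_Icc.mp (hsub h)).1) (lt_irrefl j)
  have hle : ∀ b ∈ t, j ≤ b := fun b hb =>
    (lt_of_lt_of_le hm.1 (Finset.mem_Icc.mp (hsub hb)).1).le
  have hmin : t.min' hne = m := le_antisymm (Finset.min'_le t m hmt)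
    ((Finset.mem_Icc.mp (hsub (Finset.min'_mem t hne))).1)
  rw [Finset.sort_insert (· ≤ ·) hle hjt, chainProd_cons_sort A j t hne, hmin]
  have hc : t.card = (t.card - 1) + 1 := (Nat.succ_pred_eq_of_pos (Finset.card_pos.mpr hne)).symm
  conv_lhs => rw [hc]
  rw [pow_succ, mul_neg_one, neg_smul]


/-- Inverse of a block upper triangular matrix: `A⁻¹` is block upper triangular, and for
`j ≤ k` its `(j,k)` block is the sum over strictly increasing tuples `j = i₁ < ⋯ < i_ℓ = k`
(encoded as finsets `s ⊆ [j,k]` containing `j` and `k`) of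
`(−1)^{ℓ−1} A_{i₁,i₁}⁻¹ A_{i₁,i₂} A_{i₂,i₂}⁻¹ ⋯ A_{i_{ℓ−1},i_ℓ} A_{i_ℓ,i_ℓ}⁻¹`. -/
theorem block_triangular_inverse
    (A : Matrix (Σ j : Fin M, Fin (n j)) (Σ j : Fin M, Fin (n j)) K)
    (hA : IsUnit A.det)
    (htri : ∀ p q : (Σ j : Fin M, Fin (n j)), q.1 < p.1 → A p q = 0)
    (hdiag : ∀ j : Fin M, IsUnit (getBlock A j j).det) :
    (∀ p q : (Σ j : Fin M, Fin (n j)), q.1 < p.1 → A⁻¹ p q = 0) ∧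
    ∀ j k : Fin M, j ≤ k →
      getBlock A⁻¹ j k =
        getBlock (∑ s ∈ (Finset.Icc j k).powerset.filter (fun s => j ∈ s ∧ k ∈ s),
          ((-1 : K) ^ (s.card - 1)) • chainProd A (s.sort (· ≤ ·))) j k := by
  have hBtri : BlockTriangular A⁻¹ Sigma.fst := by
    haveI := A.invertibleOfIsUnitDet hA
    exact blockTriangular_inv_of_blockTriangular (fun p q h => htri p q h)
  refine ⟨fun p q h => hBtri h, ?_⟩
  have hAB : A * A⁻¹ = 1 := mul_nonsing_inv A hA
  have hblk : ∀ j k : Fin M, j ≤ k →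
      getBlock A j j * getBlock A⁻¹ j k +
        ∑ m ∈ Finset.Ioc j k, getBlock A j m * getBlock A⁻¹ m k
        = getBlock (1 : Matrix (Σ j : Fin M, Fin (n j)) (Σ j : Fin M, Fin (n j)) K) j k := by
    intro j k hjk
    have h1 : getBlock (A * A⁻¹) j k = ∑ m : Fin M, getBlock A j m * getBlock A⁻¹ m k :=
      getBlock_mul _ _ _ _
    rw [hAB] at h1
    have h2 : ∑ m : Fin M, getBlock A j m * getBlock A⁻¹ m k
        = ∑ m ∈ Finset.Icc j k, getBlock A j m * getBlock A⁻¹ m k := by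
      refine (Finset.sum_subset (Finset.subset_univ _) ?_).symm
      intro m _ hm
      rw [Finset.mem_Icc, not_and_or, not_le, not_le] at hm
      rcases hm with hm | hm
      · have hz : getBlock A j m = 0 := by
          ext a b; exact htri ⟨j,a⟩ ⟨m,b⟩ hm
        rw [hz, Matrix.zero_mul]
      · have hz : getBlock A⁻¹ m k = 0 := by
          ext a b; exact hBtri hm
        rw [hz, Matrix.mul_zero]
    rw [h2, ← Finset.Ioc_insert_left hjk, Finset.sum_insert (by simp)] at h1
    exact h1.symm
  have hBval : ∀ j k : Fin M, j ≤ k →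
      getBlock A⁻¹ j k = (getBlock A j j)⁻¹ *
          getBlock (1 : Matrix (Σ j : Fin M, Fin (n j)) (Σ j : Fin M, Fin (n j)) K) j k
        - (getBlock A j j)⁻¹ * ∑ m ∈ Finset.Ioc j k, getBlock A j m * getBlock A⁻¹ m k := by
    intro j k hjk
    have h3 := congrArg (fun X => (getBlock A j j)⁻¹ * X) (hblk j k hjk)
    simp only [Matrix.mul_add] at h3
    rw [← Matrix.mul_assoc, Matrix.nonsing_inv_mul _ (hdiag j), Matrix.one_mul] at h3
    exact eq_sub_of_add_eq h3
  have hdiagcase : ∀ j : Fin M, getBlock A⁻¹ j j = getBlock (Tsum A j j) j j := by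
    intro j
    rw [hBval j j (le_refl j), getBlock_one_diag, Matrix.mul_one, Finset.Ioc_self,
      Finset.sum_empty, Matrix.mul_zero, sub_zero, Tsum_diag, diagInv, getBlock_embedBlock]
  have key : ∀ d : ℕ, ∀ j k : Fin M, j ≤ k → (k : ℕ) - (j : ℕ) ≤ d →
      getBlock A⁻¹ j k = getBlock (Tsum A j k) j k := by
    intro d
    induction d with
    | zero =>
      intro j k hjk hd
      have hj : (j : ℕ) ≤ (k : ℕ) := hjk
      have : j = k := Fin.ext (by omega)
      subst this
      exact hdiagcase j
    | succ d ih =>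
      intro j k hjk hd
      rcases eq_or_lt_of_le hjk with heq | hlt
      · subst heq; exact hdiagcase j
      · rw [hBval j k hjk, getBlock_one_off (ne_of_lt hlt), Matrix.mul_zero, zero_sub]
        rw [Tsum_rec A hlt, getBlock_sum]
        have hterm : ∀ m ∈ Finset.Ioc j k,
            getBlock (-(diagInv A j * embedBlock j m (getBlock A j m) * Tsum A m k)) j k
              = -((getBlock A j j)⁻¹ * (getBlock A j m * getBlock A⁻¹ m k)) := by
          intro m hm
          rw [Finset.mem_Ioc] at hm
          have hm1 : (j : ℕ) < (m : ℕ) := hm.1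
          have hm2 : (k : ℕ) ≤ d + 1 + (j : ℕ) := by omega
          rw [getBlock_neg, Matrix.mul_assoc, diagInv, embedBlock_mul_getBlock,
            embedBlock_mul_getBlock, ih m k hm.2 (by omega)]
        rw [Finset.sum_congr rfl hterm, Finset.sum_neg_distrib]
        rw [Matrix.mul_sum]
  intro j k hjk
  exact key ((k : ℕ) - (j : ℕ)) j k hjk le_rfl
end

section
/- Let Π be a real N×N matrix that is an infinitesimal generator (Metzler with all row sums zero), and let Λ be a nonnegative diagonal matrix such that every final class of Π contains a state n with Λ_{nn} > 0. Then ζ(Π − Λ) < 0. -/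
open Matrix

/-- The spectral abscissa of a real square matrix. -/
noncomputable def specAbs {n : Type*} [Fintype n] [DecidableEq n]
    (A : Matrix n n ℝ) : ℝ :=
  sSup (Complex.re '' spectrum ℂ (A.map (algebraMap ℝ ℂ)))

variable {N : ℕ}

/-- Access relation of the directed graph of nonzero off-diagonal entries. -/
def access (B : Matrix (Fin N) (Fin N) ℝ) : Fin N → Fin N → Prop :=
  Relation.ReflTransGen (fun i j => i ≠ j ∧ B i j ≠ 0)

/-- A class of `B` (strongly connected component of its directed graph). -/
def IsClass (B : Matrix (Fin N) (Fin N) ℝ) (γ : Set (Fin N)) : Prop :=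
  ∃ m : Fin N, γ = {n' : Fin N | access B m n' ∧ access B n' m}

/-- Class `γ` has access to class `δ`. -/
def classAccess (B : Matrix (Fin N) (Fin N) ℝ) (γ δ : Set (Fin N)) : Prop :=
  ∃ m ∈ γ, ∃ n' ∈ δ, access B m n'

/-- A final class: a class having access to no other class. -/
def IsFinalClass (B : Matrix (Fin N) (Fin N) ℝ) (γ : Set (Fin N)) : Prop :=
  IsClass B γ ∧ ∀ δ : Set (Fin N), IsClass B δ → δ ≠ γ → ¬ classAccess B γ δ

/-- From any state one can access a state where `lam` is positive, provided every
final class contains such a state. -/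
lemma exists_access_pos (P : Matrix (Fin N) (Fin N) ℝ) (lam : Fin N → ℝ)
    (hfinal : ∀ γ : Set (Fin N), IsFinalClass P γ → ∃ n' ∈ γ, 0 < lam n')
    (m : Fin N) : ∃ n, access P m n ∧ 0 < lam n := by
  classical
  set f : Fin N → ℕ := fun i => (Finset.univ.filter (fun p => access P i p)).card with hf
  obtain ⟨n, hnT, hmin⟩ :=
    Finset.exists_min_image (Finset.univ.filter (fun p => access P m p)) f
      ⟨m, Finset.mem_filter.mpr ⟨Finset.mem_univ _, Relation.ReflTransGen.refl⟩⟩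
  simp only [Finset.mem_filter, Finset.mem_univ, true_and] at hnT
  set γ : Set (Fin N) := {p | access P n p ∧ access P p n} with hγ
  have hfin : IsFinalClass P γ := by
    refine ⟨⟨n, rfl⟩, ?_⟩
    rintro δ ⟨m₀, rfl⟩ hne ⟨a, ha, b, hb, hab⟩
    have hnb : access P n b := Relation.ReflTransGen.trans ha.1 hab
    by_cases hbn : access P b n
    · apply hne
      have h1 : access P m₀ n := Relation.ReflTransGen.trans hb.1 hbn
      have h2 : access P n m₀ := Relation.ReflTransGen.trans hnb hb.2
      ext p
      constructor
      · rintro ⟨u, v⟩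
        exact ⟨Relation.ReflTransGen.trans h2 u, Relation.ReflTransGen.trans v h1⟩
      · rintro ⟨u, v⟩
        exact ⟨Relation.ReflTransGen.trans h1 u, Relation.ReflTransGen.trans v h2⟩
    · have hbT : access P m b := Relation.ReflTransGen.trans hnT hnb
      have hsubset : (Finset.univ.filter fun p => access P b p) ⊆
          (Finset.univ.filter fun p => access P n p) := by
        intro p hp
        simp only [Finset.mem_filter, Finset.mem_univ, true_and] at hp ⊢
        exact Relation.ReflTransGen.trans hnb hp
      have hcard : f b < f n := by
        apply Finset.card_lt_card
        rw [Finset.ssubset_iff_of_subset hsubset]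
        exact ⟨n, Finset.mem_filter.mpr ⟨Finset.mem_univ _, Relation.ReflTransGen.refl⟩,
          by simpa using hbn⟩
      have := hmin b (by simpa using hbT)
      omega
  obtain ⟨n', hn'γ, hpos⟩ := hfinal γ hfin
  exact ⟨n', Relation.ReflTransGen.trans hnT hn'γ.1, hpos⟩

/-- Let `Π` be an infinitesimal generator matrix (Metzler with zero row sums) and `Λ`
a nonnegative diagonal matrix whose diagonal is positive somewhere in each final class
of `Π`.  Then `ζ(Π − Λ) < 0`. -/
theorem generator_sub_diagonal_specAbs_neg (hN : 0 < N)
    (P : Matrix (Fin N) (Fin N) ℝ)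
    (hMetzler : ∀ i j, i ≠ j → 0 ≤ P i j)
    (hrow : ∀ i, ∑ j, P i j = 0)
    (lam : Fin N → ℝ) (hlam : ∀ i, 0 ≤ lam i)
    (hfinal : ∀ γ : Set (Fin N), IsFinalClass P γ → ∃ n' ∈ γ, 0 < lam n') :
    specAbs (P - Matrix.diagonal lam) < 0 := by
  classical
  haveI : NeZero N := ⟨hN.ne'⟩
  have huniv : (Finset.univ : Finset (Fin N)).Nonempty := Finset.univ_nonempty
  set B : Matrix (Fin N) (Fin N) ℝ := P - Matrix.diagonal lam with hBdef
  set M : Matrix (Fin N) (Fin N) ℂ := B.map (algebraMap ℝ ℂ) with hMdef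
  -- diagonal entries of P are ≤ 0
  have hPdiag : ∀ i, P i i ≤ 0 := by
    intro i
    have h := hrow i
    rw [← Finset.add_sum_erase _ _ (Finset.mem_univ i)] at h
    have hsum : 0 ≤ ∑ j ∈ Finset.univ.erase i, P i j :=
      Finset.sum_nonneg fun j hj => hMetzler i j (Ne.symm (Finset.mem_erase.mp hj).1)
    linarith
  set s : ℝ := Finset.univ.sup' huniv (fun i => lam i - P i i) with hsdef
  have hs : ∀ i, lam i - P i i ≤ s := fun i => by
    rw [hsdef]; exact Finset.le_sup' (fun i => lam i - P i i) (Finset.mem_univ i)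
  have hs0 : 0 ≤ s := by
    obtain ⟨i0⟩ := (inferInstance : Nonempty (Fin N))
    have := hs i0
    have := hPdiag i0
    have := hlam i0
    linarith
  set A : Fin N → Fin N → ℝ := fun i j => B i j + if i = j then s else 0 with hAdef
  have hA0 : ∀ i j, 0 ≤ A i j := by
    intro i j
    by_cases hij : i = j
    · subst hij
      simp only [hAdef, hBdef, Matrix.sub_apply, Matrix.diagonal_apply_eq, if_true, eq_self_iff_true]
      have := hs i
      linarith
    · simp only [hAdef, hBdef, Matrix.sub_apply, Matrix.diagonal_apply_ne _ hij, if_neg hij]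
      have := hMetzler i j hij
      linarith
  have hArow : ∀ i, ∑ j, A i j = s - lam i := by
    intro i
    have h1 : ∑ j, B i j = -lam i := by
      simp only [hBdef, Matrix.sub_apply]
      rw [Finset.sum_sub_distrib, hrow i]
      simp [Matrix.diagonal_apply, Finset.sum_ite_eq']
    simp only [hAdef]
    rw [Finset.sum_add_distrib, h1, Finset.sum_ite_eq Finset.univ i (fun _ => s)]
    simp
    ring
  -- every spectral value has negative real part
  have hre : ∀ μ ∈ spectrum ℂ M, μ.re < 0 := by
    intro μ hμ
    by_contra hc
    push_neg at hc
    have hdet : (algebraMap ℂ (Matrix (Fin N) (Fin N) ℂ) μ - M).det = 0 := by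
      by_contra hd
      exact (spectrum.mem_iff.mp hμ)
        ((Matrix.isUnit_iff_isUnit_det _).mpr (isUnit_iff_ne_zero.mpr hd))
    obtain ⟨x, hx0, hxv⟩ := (Matrix.exists_mulVec_eq_zero_iff).mpr hdet
    have heig : ∀ i, ∑ j, (algebraMap ℝ ℂ) (B i j) * x j = μ * x i := by
      intro i
      have h := congrFun hxv i
      rw [Matrix.sub_mulVec] at h
      have h1 : (algebraMap ℂ (Matrix (Fin N) (Fin N) ℂ) μ).mulVec x i = μ * x i := by
        simp [Matrix.mulVec, dotProduct, Matrix.algebraMap_matrix_apply,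
          ite_mul, Finset.sum_ite_eq]
      have h2 : (M.mulVec x) i = ∑ j, (algebraMap ℝ ℂ) (B i j) * x j := by
        simp [Matrix.mulVec, dotProduct, hMdef, Matrix.map_apply]
      simp only [Pi.sub_apply, Pi.zero_apply, h1, h2, sub_eq_zero] at h
      linear_combination -h
    have heigA : ∀ i, ∑ j, (A i j : ℂ) * x j = (μ + s) * x i := by
      intro i
      have hcast : ∀ j, ((A i j : ℝ) : ℂ) =
          (algebraMap ℝ ℂ) (B i j) + (if i = j then (s : ℂ) else 0) := by
        intro j
        simp only [hAdef]
        push_cast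
        split <;> simp [Complex.coe_algebraMap]
      calc ∑ j, (A i j : ℂ) * x j
          = ∑ j, ((algebraMap ℝ ℂ) (B i j) * x j + (if i = j then (s:ℂ) else 0) * x j) := by
            refine Finset.sum_congr rfl fun j _ => ?_
            rw [hcast j]; ring
        _ = (∑ j, (algebraMap ℝ ℂ) (B i j) * x j) + ∑ j, (if i = j then (s:ℂ) else 0) * x j := by
            rw [Finset.sum_add_distrib]
        _ = μ * x i + (s:ℂ) * x i := by
            rw [heig i]
            congr 1
            simp [ite_mul]
        _ = (μ + s) * x i := by ring
    set M0 : ℝ := Finset.univ.sup' huniv (fun i => ‖x i‖) with hM0def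
    obtain ⟨i0, _, hi0⟩ := Finset.exists_mem_eq_sup' huniv (fun i => ‖x i‖)
    have hle : ∀ j, ‖x j‖ ≤ M0 := fun j => by
      rw [hM0def]; exact Finset.le_sup' (fun i => ‖x i‖) (Finset.mem_univ j)
    have hM0pos : 0 < M0 := by
      obtain ⟨k, hk⟩ := Function.ne_iff.mp hx0
      have : 0 < ‖x k‖ := by
        simpa using (norm_pos_iff.mpr (by simpa using hk))
      exact lt_of_lt_of_le this (hle k)
    have hkey : ∀ i, ‖x i‖ = M0 →
        lam i = 0 ∧ ∀ j, A i j ≠ 0 → ‖x j‖ = M0 := by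
      intro i hi
      have h1 : s * M0 ≤ ∑ j, A i j * ‖x j‖ := by
        have habs : ‖μ + s‖ * ‖x i‖
            ≤ ∑ j, A i j * ‖x j‖ := by
          rw [← norm_mul, ← heigA i]
          calc ‖∑ j, (A i j : ℂ) * x j‖
              ≤ ∑ j, ‖(A i j : ℂ) * x j‖ :=
                norm_sum_le _ _
            _ = ∑ j, A i j * ‖x j‖ := by
                refine Finset.sum_congr rfl fun j _ => ?_
                rw [norm_mul, Complex.norm_real, Real.norm_eq_abs, abs_of_nonneg (hA0 i j)]
        have hsle : s ≤ ‖μ + s‖ := by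
          have h := Complex.re_le_norm (μ + s)
          have h2 : (μ + (s:ℂ)).re = μ.re + s := by simp
          linarith
        calc s * M0 = s * ‖x i‖ := by rw [hi]
          _ ≤ ‖μ + s‖ * ‖x i‖ := by
              apply mul_le_mul_of_nonneg_right hsle (norm_nonneg _)
          _ ≤ _ := habs
      have h2 : ∑ j, A i j * ‖x j‖ ≤ (s - lam i) * M0 := by
        calc ∑ j, A i j * ‖x j‖ ≤ ∑ j, A i j * M0 :=
              Finset.sum_le_sum fun j _ => mul_le_mul_of_nonneg_left (hle j) (hA0 i j)
          _ = (∑ j, A i j) * M0 := (Finset.sum_mul _ _ _).symm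
          _ = (s - lam i) * M0 := by rw [hArow i]
      have hlam0 : lam i = 0 := by nlinarith [hlam i, hM0pos]
      refine ⟨hlam0, ?_⟩
      have hsum0 : ∑ j, A i j * (M0 - ‖x j‖) = 0 := by
        have hexp : ∑ j, A i j * (M0 - ‖x j‖)
            = (∑ j, A i j) * M0 - ∑ j, A i j * ‖x j‖ := by
          rw [Finset.sum_mul]
          rw [← Finset.sum_sub_distrib]
          exact Finset.sum_congr rfl fun j _ => by ring
        rw [hexp, hArow i, hlam0, sub_zero]
        have h2' := h2
        rw [hlam0, sub_zero] at h2'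
        linarith
      intro j hAj
      have hterm := (Finset.sum_eq_zero_iff_of_nonneg
        (fun j _ => mul_nonneg (hA0 i j) (sub_nonneg.mpr (hle j)))).mp hsum0 j (Finset.mem_univ j)
      rcases mul_eq_zero.mp hterm with h | h
      · exact absurd h hAj
      · linarith [sub_eq_zero.mp h]
    -- closure of the set of maximizers under access
    have hclosed : ∀ {a b : Fin N}, access P a b →
        ‖x a‖ = M0 → ‖x b‖ = M0 := by
      intro a b hab
      induction hab with
      | refl => exact id
      | tail h1 h2 ih =>
          intro ha
          have hb' := ih ha
          rename_i c d
          apply (hkey c hb').2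
          have hAcd : A c d = P c d := by
            simp [hAdef, hBdef, Matrix.sub_apply, Matrix.diagonal_apply_ne _ h2.1, if_neg h2.1]
          rw [hAcd]
          exact h2.2
    obtain ⟨n, hacc, hpos⟩ := exists_access_pos P lam hfinal i0
    have : lam n = 0 := (hkey n (hclosed hacc hi0.symm)).1
    linarith
  -- spectrum is finite and nonempty
  have hfin : (spectrum ℂ M).Finite := Matrix.finite_spectrum M
  have hsne : (spectrum ℂ M).Nonempty := by
    have hEq := AlgEquiv.spectrum_eq (Matrix.toLinAlgEquiv (Pi.basisFun ℂ (Fin N))) M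
    obtain ⟨c, hc⟩ := Module.End.exists_eigenvalue
      ((Matrix.toLinAlgEquiv (Pi.basisFun ℂ (Fin N))) M)
    exact ⟨c, hEq ▸ hc.mem_spectrum⟩
  rw [specAbs]
  show sSup (Complex.re '' spectrum ℂ M) < 0
  refine ((hfin.image _).csSup_lt_iff (hsne.image _)).mpr ?_
  rintro y ⟨μ, hμ, rfl⟩
  exact hre μ hμ
end

section
/- Let Π be a nonnegative N×N matrix with all row sums equal to 1, and let Υ be an N×N matrix with entries in [0,1] such that every final class of Π contains states m, n with Π_{mn} > 0 and Υ_{mn} < 1. Then the spectral abscissa of the Hadamard product Π ⊙ Υ is strictly less than 1; equivalently ζ(Π⊙Υ − I) < 0. -/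
open Matrix

variable {N : ℕ}

/- ------------------- auxiliary combinatorial lemmas ------------------- -/

lemma access_trans {B : Matrix (Fin N) (Fin N) ℝ} {a b c : Fin N}
    (h1 : access B a b) (h2 : access B b c) : access B a c :=
  Relation.ReflTransGen.trans h1 h2

/-- the class of a point -/
def cls (B : Matrix (Fin N) (Fin N) ℝ) (m : Fin N) : Set (Fin N) :=
  {n' : Fin N | access B m n' ∧ access B n' m}

lemma cls_eq_of_mem {B : Matrix (Fin N) (Fin N) ℝ} {m n : Fin N}
    (h : n ∈ cls B m) : cls B n = cls B m := by
  obtain ⟨h1, h2⟩ := h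
  ext x
  exact ⟨fun ⟨a, b⟩ => ⟨access_trans h1 a, access_trans b h2⟩,
    fun ⟨a, b⟩ => ⟨access_trans h2 a, access_trans b h1⟩⟩

lemma exists_access_final (B : Matrix (Fin N) (Fin N) ℝ) (i : Fin N) :
    ∃ j, access B i j ∧ IsFinalClass B (cls B j) := by
  suffices H : ∀ (c : ℕ) (i : Fin N), ({n | access B i n}).ncard ≤ c →
      ∃ j, access B i j ∧ IsFinalClass B (cls B j) from
    H ({n | access B i n}).ncard i le_rfl
  intro c
  induction c with
  | zero =>
    intro i hc
    exfalso
    have hi : i ∈ {n | access B i n} := Relation.ReflTransGen.refl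
    have : ({n | access B i n}).ncard ≠ 0 := by
      simpa [Set.ncard_eq_zero (Set.toFinite _), ← Set.nonempty_iff_ne_empty] using
        Set.nonempty_of_mem hi
    omega
  | succ c ih =>
    intro i hc
    by_cases hfin : IsFinalClass B (cls B i)
    · exact ⟨i, Relation.ReflTransGen.refl, hfin⟩
    · rw [IsFinalClass, not_and] at hfin
      have hcls : IsClass B (cls B i) := ⟨i, rfl⟩
      push_neg at hfin
      obtain ⟨δ, hδcls, hδne, m, hm, n, hn, hmn⟩ := hfin hcls
      have him : access B i m := hm.1
      have hin : access B i n := access_trans him hmn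
      have hni : ¬ access B n i := by
        intro hni
        apply hδne
        obtain ⟨m', rfl⟩ := hδcls
        have : cls B n = cls B m' := cls_eq_of_mem hn
        have h2 : cls B n = cls B i := cls_eq_of_mem ⟨hin, hni⟩
        show cls B m' = cls B i
        rw [← this, h2]
      have hsub : {x | access B n x} ⊂ {x | access B i x} := by
        constructor
        · intro x hx; exact access_trans hin hx
        · intro hss
          exact hni (hss (Relation.ReflTransGen.refl : access B i i))
      have hlt : ({x | access B n x}).ncard < ({x | access B i x}).ncard :=
        Set.ncard_lt_ncard hsub (Set.toFinite _)
      obtain ⟨j, hj1, hj2⟩ := ih n (by omega)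
      exact ⟨j, access_trans hin hj1, hj2⟩

/-- strict row sum bound -/
lemma row_lt_one {P U : Matrix (Fin N) (Fin N) ℝ}
    (hPnonneg : ∀ i j, 0 ≤ P i j) (hrow : ∀ i, ∑ j, P i j = 1)
    (hU : ∀ i j, U i j ∈ Set.Icc (0 : ℝ) 1) {i j0 : Fin N}
    (hP : 0 < P i j0) (hUlt : U i j0 < 1) :
    ∑ j, P i j * U i j < 1 := by
  have h : ∑ j, P i j * U i j < ∑ j, P i j := by
    apply Finset.sum_lt_sum
    · intro l _
      exact mul_le_of_le_one_right (hPnonneg i l) (hU i l).2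
    · exact ⟨j0, Finset.mem_univ _, by nlinarith [hP, hUlt, (hU i j0).1]⟩
  rw [hrow i] at h
  exact h

/-- convert a `P`-path to a leaky row into a `P ⊙ U`-path to a leaky row -/
lemma access_leaky {P U : Matrix (Fin N) (Fin N) ℝ}
    (hPnonneg : ∀ i j, 0 ≤ P i j) (hrow : ∀ i, ∑ j, P i j = 1)
    (hU : ∀ i j, U i j ∈ Set.Icc (0 : ℝ) 1) {i r : Fin N}
    (hpath : access P i r) (hleak : ∑ j, P r j * U r j < 1) :
    ∃ r', access (P ⊙ U) i r' ∧ ∑ j, P r' j * U r' j < 1 := by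
  induction hpath using Relation.ReflTransGen.head_induction_on with
  | refl => exact ⟨r, Relation.ReflTransGen.refl, hleak⟩
  | head hedge _ ih =>
    rename_i a c _
    obtain ⟨hne, hPac⟩ := hedge
    by_cases hB : (P ⊙ U) a c = 0
    · rw [Matrix.hadamard_apply] at hB
      have hUac : U a c = 0 := by
        rcases mul_eq_zero.mp hB with h | h
        · exact absurd h hPac
        · exact h
      refine ⟨a, Relation.ReflTransGen.refl, ?_⟩
      exact row_lt_one hPnonneg hrow hU ((hPnonneg a c).lt_of_ne (Ne.symm hPac))
        (by rw [hUac]; norm_num)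
    · obtain ⟨r', hp, hl⟩ := ih
      exact ⟨r', Relation.ReflTransGen.head ⟨hne, hB⟩ hp, hl⟩

/- ------------------- row sums of powers ------------------- -/

section RowSums
variable {B : Matrix (Fin N) (Fin N) ℝ}

lemma pow_nonneg' (hB : ∀ i j, 0 ≤ B i j) (k : ℕ) : ∀ i j, 0 ≤ (B ^ k) i j := by
  induction k with
  | zero => intro i j; rw [pow_zero]; by_cases h : i = j <;> simp [Matrix.one_apply, h]
  | succ k ih =>
    intro i j
    rw [pow_succ, Matrix.mul_apply]
    exact Finset.sum_nonneg fun l _ => mul_nonneg (ih i l) (hB l j)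

lemma rowsum_succ (k : ℕ) (i : Fin N) :
    ∑ j, (B ^ (k + 1)) i j = ∑ l, B i l * ∑ j, (B ^ k) l j := by
  simp_rw [pow_succ', Matrix.mul_apply, Finset.mul_sum]
  rw [Finset.sum_comm]

lemma rowsum_le_one (hB : ∀ i j, 0 ≤ B i j) (hrowB : ∀ i, ∑ j, B i j ≤ 1) (k : ℕ) :
    ∀ i, ∑ j, (B ^ k) i j ≤ 1 := by
  induction k with
  | zero => intro i; simp [Matrix.one_apply]
  | succ k ih =>
    intro i
    rw [rowsum_succ]
    calc ∑ l, B i l * ∑ j, (B ^ k) l j ≤ ∑ l, B i l * 1 :=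
          Finset.sum_le_sum fun l _ => mul_le_mul_of_nonneg_left (ih l) (hB i l)
      _ ≤ 1 := by simpa using hrowB i

lemma rowsum_anti (hB : ∀ i j, 0 ≤ B i j) (hrowB : ∀ i, ∑ j, B i j ≤ 1) :
    ∀ i, Antitone (fun k => ∑ j, (B ^ k) i j) := by
  have step : ∀ k i, ∑ j, (B ^ (k + 1)) i j ≤ ∑ j, (B ^ k) i j := by
    intro k
    induction k with
    | zero => intro i; simpa [Matrix.one_apply] using hrowB i
    | succ k ih =>
      intro i
      rw [rowsum_succ, rowsum_succ]
      exact Finset.sum_le_sum fun l _ => mul_le_mul_of_nonneg_left (ih l) (hB i l)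
  intro i
  exact antitone_nat_of_succ_le fun k => step k i

lemma rowsum_propagate (hB : ∀ i j, 0 ≤ B i j) (hrowB : ∀ i, ∑ j, B i j ≤ 1)
    {i r : Fin N} (hpath : access B i r) (hleak : ∑ j, B r j < 1) :
    ∃ k, ∑ j, (B ^ k) i j < 1 := by
  induction hpath using Relation.ReflTransGen.head_induction_on with
  | refl => exact ⟨1, by simpa using hleak⟩
  | head hedge _ ih =>
    rename_i a c _
    obtain ⟨k, hk⟩ := ih
    refine ⟨k + 1, ?_⟩
    rw [rowsum_succ]
    have hstrict : ∑ l, B a l * ∑ j, (B ^ k) l j < ∑ l, B a l := by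
      apply Finset.sum_lt_sum
      · intro l _
        exact mul_le_of_le_one_right (hB a l) (rowsum_le_one hB hrowB k l)
      · refine ⟨c, Finset.mem_univ _, ?_⟩
        have hpos : 0 < B a c := (hB a c).lt_of_ne (Ne.symm hedge.2)
        nlinarith [hk]
    exact hstrict.trans_le (hrowB a)

lemma exists_uniform_K (hB : ∀ i j, 0 ≤ B i j) (hrowB : ∀ i, ∑ j, B i j ≤ 1)
    (hall : ∀ i : Fin N, ∃ k, ∑ j, (B ^ k) i j < 1) :
    ∃ K, 1 ≤ K ∧ ∀ i, ∑ j, (B ^ K) i j < 1 := by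
  choose f hf using hall
  refine ⟨Finset.univ.sup f + 1, le_add_self, fun i => ?_⟩
  have h1 : f i ≤ Finset.univ.sup f + 1 := (Finset.le_sup (Finset.mem_univ i)).trans (by omega)
  exact lt_of_le_of_lt (rowsum_anti hB hrowB i h1) (hf i)
end RowSums

/- ------------------- spectral lemmas ------------------- -/

/-- eigenvector from spectrum membership -/
lemma exists_eigvec {A : Matrix (Fin N) (Fin N) ℂ} {μ : ℂ}
    (h : μ ∈ spectrum ℂ A) : ∃ v : Fin N → ℂ, v ≠ 0 ∧ A.mulVec v = μ • v := by
  rw [spectrum.mem_iff] at h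
  rw [Matrix.isUnit_iff_isUnit_det, isUnit_iff_ne_zero, not_not] at h
  obtain ⟨v, hv, hAv⟩ := (Matrix.exists_mulVec_eq_zero_iff).mpr h
  refine ⟨v, hv, ?_⟩
  have := hAv
  rw [Matrix.sub_mulVec] at this
  have h2 : (algebraMap ℂ (Matrix (Fin N) (Fin N) ℂ)) μ = μ • (1 : Matrix (Fin N) (Fin N) ℂ) := by
    rw [Algebra.algebraMap_eq_smul_one]
  rw [h2, Matrix.smul_mulVec, Matrix.one_mulVec] at this
  have := sub_eq_zero.mp this
  rw [← this]

lemma pow_mulVec_eig {A : Matrix (Fin N) (Fin N) ℂ} {μ : ℂ} {v : Fin N → ℂ}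
    (h : A.mulVec v = μ • v) (K : ℕ) : (A ^ K).mulVec v = μ ^ K • v := by
  induction K with
  | zero => simp [Matrix.one_mulVec]
  | succ K ih =>
    rw [pow_succ', ← Matrix.mulVec_mulVec, ih, Matrix.mulVec_smul, h, smul_smul]
    ring_nf

/-- eigenvalue modulus bound from uniform power-row-sum bound -/
lemma abs_eig_lt_one {B : Matrix (Fin N) (Fin N) ℝ} (hBk : ∀ k i j, 0 ≤ (B ^ k) i j)
    {K : ℕ} (_hK1 : 1 ≤ K) (hK : ∀ i, ∑ j, (B ^ K) i j < 1)
    {μ : ℂ} (h : μ ∈ spectrum ℂ (B.map (algebraMap ℝ ℂ))) : ‖μ‖ < 1 := by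
  obtain ⟨v, hv, hAv⟩ := exists_eigvec h
  haveI hne : Nonempty (Fin N) := by
    by_contra hcon
    exact hv (funext fun j => absurd ⟨j⟩ hcon)
  obtain ⟨i₀, -, hmax⟩ := Finset.exists_max_image Finset.univ (fun j => ‖v j‖)
    Finset.univ_nonempty
  have hvpos : 0 < ‖v i₀‖ := by
    by_contra hcon
    push_neg at hcon
    apply hv
    funext j
    have := hmax j (Finset.mem_univ j)
    have : ‖v j‖ = 0 := le_antisymm (this.trans hcon) (norm_nonneg _)
    simpa using this
  have hpow : ((B.map (algebraMap ℝ ℂ)) ^ K).mulVec v = μ ^ K • v := pow_mulVec_eig hAv K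
  have hmap : (B.map (algebraMap ℝ ℂ)) ^ K = (B ^ K).map (algebraMap ℝ ℂ) := by
    have := map_pow ((algebraMap ℝ ℂ).mapMatrix) B K
    simpa [RingHom.mapMatrix_apply] using this.symm
  have hentry : (μ ^ K • v) i₀ = ∑ j, ((algebraMap ℝ ℂ) ((B ^ K) i₀ j)) * v j := by
    rw [← hpow, hmap, Matrix.mulVec, dotProduct]
    simp [Matrix.map_apply]
  have habs : ‖μ ^ K‖ * ‖v i₀‖ < ‖v i₀‖ := by
    have h1 : ‖(μ ^ K • v) i₀‖ ≤ ∑ j, (B ^ K) i₀ j * ‖v j‖ := by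
      rw [hentry]
      refine (norm_sum_le _ _).trans (le_of_eq ?_)
      refine Finset.sum_congr rfl fun j _ => ?_
      rw [norm_mul]
      congr 1
      simpa [Complex.norm_real] using abs_of_nonneg (hBk K i₀ j)
    have h2 : ∑ j, (B ^ K) i₀ j * ‖v j‖ ≤ ∑ j, (B ^ K) i₀ j * ‖v i₀‖ :=
      Finset.sum_le_sum fun j _ =>
        mul_le_mul_of_nonneg_left (hmax j (Finset.mem_univ j)) (hBk K i₀ j)
    have h3 : ∑ j, (B ^ K) i₀ j * ‖v i₀‖ < 1 * ‖v i₀‖ := by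
      rw [← Finset.sum_mul]
      exact mul_lt_mul_of_pos_right (hK i₀) hvpos
    calc ‖μ ^ K‖ * ‖v i₀‖ = ‖(μ ^ K • v) i₀‖ := by
          simp [Pi.smul_apply]
      _ ≤ _ := h1
      _ ≤ _ := h2
      _ < _ := h3
      _ = ‖v i₀‖ := one_mul _
  have hK' : ‖μ‖ ^ K < 1 := by
    have habs2 : ‖μ ^ K‖ * ‖v i₀‖ < 1 * ‖v i₀‖ := by
      rwa [one_mul]
    have := (mul_lt_mul_iff_left₀ hvpos).mp habs2
    rwa [norm_pow] at this
  by_contra hcon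
  push_neg at hcon
  exact absurd hK' (not_lt.mpr (one_le_pow₀ hcon))

/-- bound on `specAbs` from a bound on real parts of eigenvalues -/
lemma specAbs_lt (hN : 0 < N) (A : Matrix (Fin N) (Fin N) ℝ) (c : ℝ)
    (h : ∀ μ ∈ spectrum ℂ (A.map (algebraMap ℝ ℂ)), μ.re < c) : specAbs A < c := by
  haveI : Nonempty (Fin N) := Fin.pos_iff_nonempty.mp hN
  set Ac := A.map (algebraMap ℝ ℂ) with hAc
  have hnonempty : (spectrum ℂ Ac).Nonempty :=
    spectrum.nonempty_of_isAlgClosed_of_finiteDimensional ℂ Ac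
  have hfin : (Complex.re '' spectrum ℂ Ac).Finite := (Matrix.finite_spectrum Ac).image _
  have hmem : sSup (Complex.re '' spectrum ℂ Ac) ∈ Complex.re '' spectrum ℂ Ac :=
    Set.Nonempty.csSup_mem (hnonempty.image _) hfin
  obtain ⟨μ, hμ, hμeq⟩ := hmem
  rw [specAbs, ← hμeq]
  exact h μ hμ

/-- Let `Π` be a nonnegative stochastic matrix (row sums one) and `Υ` a matrix with
entries in `[0,1]` such that every final class of `Π` contains states `m, n` with
`Π_{mn} > 0` and `Υ_{mn} < 1`.  Then `ζ(Π ⊙ Υ) < 1`, equivalently `ζ(Π ⊙ Υ − I) < 0`. -/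
theorem hadamard_substochastic_specAbs_lt_one (hN : 0 < N)
    (P : Matrix (Fin N) (Fin N) ℝ)
    (hPnonneg : ∀ i j, 0 ≤ P i j)
    (hrow : ∀ i, ∑ j, P i j = 1)
    (U : Matrix (Fin N) (Fin N) ℝ)
    (hU : ∀ i j, U i j ∈ Set.Icc (0 : ℝ) 1)
    (hfinal : ∀ γ : Set (Fin N), IsFinalClass P γ →
      ∃ m ∈ γ, ∃ n' ∈ γ, 0 < P m n' ∧ U m n' < 1) :
    specAbs (P ⊙ U) < 1 ∧ specAbs (P ⊙ U - 1) < 0 := by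
  set B := P ⊙ U with hBdef
  have hBentry : ∀ i j, B i j = P i j * U i j := fun i j => rfl
  have hBnn : ∀ i j, 0 ≤ B i j := fun i j =>
    mul_nonneg (hPnonneg i j) (hU i j).1
  have hrowB : ∀ i, ∑ j, B i j ≤ 1 := by
    intro i
    calc ∑ j, B i j ≤ ∑ j, P i j :=
          Finset.sum_le_sum fun j _ => mul_le_of_le_one_right (hPnonneg i j) (hU i j).2
      _ = 1 := hrow i
  -- every state B-accesses a leaky row
  have hall : ∀ i : Fin N, ∃ k, ∑ j, (B ^ k) i j < 1 := by
    intro i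
    obtain ⟨j, hij, hjfinal⟩ := exists_access_final P i
    obtain ⟨m, hm, n', _, hPmn, hUmn⟩ := hfinal (cls P j) hjfinal
    have hleakm : ∑ l, P m l * U m l < 1 := row_lt_one hPnonneg hrow hU hPmn hUmn
    have him : access P i m := access_trans hij hm.1
    obtain ⟨r', hpath, hleak⟩ := access_leaky hPnonneg hrow hU him hleakm
    have hleak' : ∑ l, B r' l < 1 := by simpa [hBentry] using hleak
    exact rowsum_propagate hBnn hrowB hpath hleak'
  obtain ⟨K, hK1, hK⟩ := exists_uniform_K hBnn hrowB hall
  have heig : ∀ μ ∈ spectrum ℂ (B.map (algebraMap ℝ ℂ)), ‖μ‖ < 1 :=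
    fun μ hμ => abs_eig_lt_one (pow_nonneg' hBnn) hK1 hK hμ
  constructor
  · exact specAbs_lt hN B 1 fun μ hμ =>
      lt_of_le_of_lt (Complex.re_le_norm μ) (heig μ hμ)
  · apply specAbs_lt hN (B - 1) 0
    intro μ hμ
    have hmapsub : (B - 1).map (algebraMap ℝ ℂ) = B.map (algebraMap ℝ ℂ) - 1 := by
      have := map_sub ((algebraMap ℝ ℂ).mapMatrix) B 1
      simpa [RingHom.mapMatrix_apply] using this
    rw [hmapsub] at hμ
    have hshift : μ + 1 ∈ spectrum ℂ (B.map (algebraMap ℝ ℂ)) := by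
      rw [spectrum.mem_iff] at hμ ⊢
      convert hμ using 2
      rw [map_add, _root_.map_one]
      abel
    have := lt_of_le_of_lt (Complex.re_le_norm (μ + 1)) (heig _ hshift)
    simp only [Complex.add_re, Complex.one_re] at this
    linarith
end
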